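/- arXiv:1704.07901 — 7 statements merged into one kernel-verified Lean document; each statement's English description precedes it below -/
import Mathlib

section
/- Let f be a linearized polynomial over \mathbb{F}_{q^m} with P coefficients, let \theta_1,...,\theta_{P_o} \in \mathbb{F}_{q^m} be linearly independent over \mathbb{F}_q, and let G be a P_o \times P matrix with entries in \mathbb{F}_q of rank P. Then f is uniquely determined by the row vector [f(\theta_1),...,f(\theta_{P_o})] \cdot G; i.e., if two such linearized polynomials give the same product with G, they are equal. -/
open Polynomial

/-- Frobenius-power `x ↦ x^{q^l}` is `𝔽_q`-linear on sums. -/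
private lemma frob_sum_smul (Fq F : Type*) [Field Fq] [Fintype Fq] [Field F] [Algebra Fq F]
    {ι : Type*} (s : Finset ι) (c : ι → Fq) (x : ι → F) (l : ℕ) :
    (∑ i ∈ s, c i • x i) ^ (Fintype.card Fq) ^ l =
      ∑ i ∈ s, c i • (x i ^ (Fintype.card Fq) ^ l) := by
  set p := ringChar Fq with hpdef
  haveI : CharP Fq p := ringChar.charP Fq
  obtain ⟨n, hp, hq⟩ := FiniteField.card Fq p
  haveI : Fact p.Prime := ⟨hp⟩
  haveI : CharP F p := charP_of_injective_algebraMap (algebraMap Fq F).injective p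
  haveI : ExpChar F p := ExpChar.prime hp
  have hql : (Fintype.card Fq) ^ l = p ^ (n * l) := by rw [hq, ← pow_mul]
  rw [hql, sum_pow_char_pow]
  refine Finset.sum_congr rfl fun i _ => ?_
  rw [_root_.smul_pow, ← hql]
  congr 1
  exact FiniteField.pow_card_pow l (c i)

/-- A "linearized polynomial" with `P` coefficients vanishing on `P` linearly
independent points is zero. -/
private lemma key_lemma (Fq F : Type*) [Field Fq] [Fintype Fq] [Field F] [Algebra Fq F]
    (P : ℕ) (u : Fin P → F) (η : Fin P → F) (hη : LinearIndependent Fq η)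
    (h : ∀ j : Fin P, ∑ l : Fin P, u l * η j ^ (Fintype.card Fq) ^ (l : ℕ) = 0) :
    u = 0 := by
  classical
  by_contra hu
  obtain ⟨l0, hl0⟩ : ∃ l, u l ≠ 0 := by
    by_contra hall
    push_neg at hall
    exact hu (funext hall)
  set q := Fintype.card Fq with hqdef
  have hq2 : 2 ≤ q := Fintype.one_lt_card
  -- the polynomial
  set g : F[X] := ∑ l : Fin P, C (u l) * X ^ (q ^ (l : ℕ)) with hg
  have hgne : g ≠ 0 := by
    intro h0
    have : g.coeff (q ^ (l0 : ℕ)) = u l0 := by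
      rw [hg, Polynomial.finset_sum_coeff]
      rw [Finset.sum_eq_single l0]
      · simp
      · intro b _ hb
        have : q ^ (b : ℕ) ≠ q ^ (l0 : ℕ) := by
          intro heq
          exact hb (Fin.ext (Nat.pow_right_injective hq2 heq))
        simp only [coeff_C_mul, coeff_X_pow, if_neg (Ne.symm this), mul_zero]
      · simp
    rw [h0] at this
    simp at this
    exact hl0 this.symm
  have hP1 : 1 ≤ P := l0.pos
  have hdeg : g.natDegree ≤ q ^ (P - 1) := by
    refine Polynomial.natDegree_sum_le_of_forall_le _ _ fun l _ => ?_
    refine (Polynomial.natDegree_C_mul_le _ _).trans ?_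
    refine (Polynomial.natDegree_X_pow_le _).trans ?_
    exact Nat.pow_le_pow_right (by omega) (by omega)
  -- the span
  set V : Submodule Fq F := Submodule.span Fq (Set.range η) with hV
  haveI : Module.Finite Fq V := by
    apply FiniteDimensional.span_of_finite
    exact Set.finite_range η
  haveI : Finite V := Module.finite_of_finite Fq
  haveI : Fintype V := Fintype.ofFinite _
  have hcardV : Fintype.card V = q ^ P := by
    rw [Module.card_eq_pow_finrank (K := Fq) (V := V)]
    congr 1
    have := finrank_span_eq_card hη
    simpa using this
  -- every element of V is a root of g
  have hroot : ∀ x : F, x ∈ V → g.eval x = 0 := by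
    intro x hx
    obtain ⟨c, hc⟩ := (Submodule.mem_span_range_iff_exists_fun Fq).mp hx
    have heval : g.eval x = ∑ l : Fin P, u l * x ^ (q ^ (l : ℕ)) := by
      rw [hg, Polynomial.eval_finset_sum]
      simp
    rw [heval]
    have hxpow : ∀ l : Fin P, x ^ (q ^ (l : ℕ)) = ∑ i : Fin P, c i • (η i ^ (q ^ (l : ℕ))) := by
      intro l
      rw [← hc, frob_sum_smul]
    calc ∑ l : Fin P, u l * x ^ (q ^ (l : ℕ))
        = ∑ l : Fin P, ∑ i : Fin P, c i • (u l * η i ^ (q ^ (l : ℕ))) := by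
          refine Finset.sum_congr rfl fun l _ => ?_
          rw [hxpow l, Finset.mul_sum]
          refine Finset.sum_congr rfl fun i _ => ?_
          rw [mul_smul_comm]
      _ = ∑ i : Fin P, c i • (∑ l : Fin P, u l * η i ^ (q ^ (l : ℕ))) := by
          rw [Finset.sum_comm]
          simp [Finset.smul_sum]
      _ = 0 := by
          simp only [h]
          simp
  -- counting
  have hcard : Fintype.card V ≤ g.roots.toFinset.card := by
    rw [← Fintype.card_coe (g.roots.toFinset)]
    have hmem : ∀ x : V, (x : F) ∈ g.roots.toFinset := by
      intro x
      rw [Multiset.mem_toFinset, Polynomial.mem_roots hgne]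
      exact hroot x.1 x.2
    apply Fintype.card_le_of_injective (fun x : V => (⟨(x : F), hmem x⟩ : g.roots.toFinset))
    intro a b hab
    exact Subtype.ext (Subtype.mk_eq_mk.mp hab)
  have hcard2 : g.roots.toFinset.card ≤ g.natDegree :=
    le_trans (Multiset.toFinset_card_le _) (Polynomial.card_roots' g)
  have : q ^ P ≤ q ^ (P - 1) := by
    calc q ^ P = Fintype.card V := hcardV.symm
      _ ≤ g.roots.toFinset.card := hcard
      _ ≤ g.natDegree := hcard2
      _ ≤ q ^ (P - 1) := hdeg
  have hlt : q ^ (P - 1) < q ^ P := Nat.pow_lt_pow_right hq2 (by omega)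
  omega

/-- A linearized polynomial `f(x) = ∑_{i=1}^{P} v_i x^{q^{i-1}}` with `P` coefficients
is uniquely determined by `[f(θ_1),...,f(θ_{P_o})] ⬝ G`, where `θ_1,...,θ_{P_o}` are
linearly independent over `𝔽_q` and `G` is a `P_o × P` matrix over `𝔽_q` of rank `P`. -/
theorem linearized_poly_unique_from_full_rank_combinations
    (Fq F : Type*) [Field Fq] [Fintype Fq] [Field F] [Algebra Fq F]
    (P Po : ℕ) (hPPo : P ≤ Po) (v w : Fin P → F) (θ : Fin Po → F)
    (hθ : LinearIndependent Fq θ)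
    (G : Matrix (Fin Po) (Fin P) Fq) (hG : G.rank = P)
    (h : ∀ j : Fin P,
      (∑ i : Fin Po,
          (∑ l : Fin P, v l * θ i ^ (Fintype.card Fq) ^ (l : ℕ)) * algebraMap Fq F (G i j)) =
        ∑ i : Fin Po,
          (∑ l : Fin P, w l * θ i ^ (Fintype.card Fq) ^ (l : ℕ)) * algebraMap Fq F (G i j)) :
    v = w := by
  classical
  set q := Fintype.card Fq with hqdef
  set u : Fin P → F := fun l => v l - w l with hu
  -- the combined points
  set η : Fin P → F := fun j => ∑ i : Fin Po, G i j • θ i with hη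
  -- injectivity of mulVecLin from the rank hypothesis
  have hinj : Function.Injective G.mulVecLin := by
    rw [← LinearMap.ker_eq_bot]
    have hrn := LinearMap.finrank_range_add_finrank_ker G.mulVecLin
    rw [Module.finrank_pi] at hrn
    have hrk : Module.finrank Fq (LinearMap.range G.mulVecLin) = P := hG
    rw [hrk] at hrn
    simp only [Fintype.card_fin] at hrn
    have : Module.finrank Fq (LinearMap.ker G.mulVecLin) = 0 := by omega
    exact Submodule.finrank_eq_zero.mp this
  -- linear independence of η
  have hηli : LinearIndependent Fq η := by
    rw [Fintype.linearIndependent_iff]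
    intro c hc
    have hsum : ∑ j : Fin P, c j • η j = ∑ i : Fin Po, (G.mulVec c i) • θ i := by
      simp only [hη, Finset.smul_sum]
      rw [Finset.sum_comm]
      refine Finset.sum_congr rfl fun i _ => ?_
      rw [Matrix.mulVec, dotProduct, Finset.sum_smul]
      refine Finset.sum_congr rfl fun j _ => ?_
      rw [smul_smul, mul_comm]
    rw [hsum] at hc
    have hmv : G.mulVec c = 0 := by
      funext i
      exact (Fintype.linearIndependent_iff.mp hθ) (G.mulVec c) hc i
    have : G.mulVecLin c = G.mulVecLin 0 := by
      simpa [Matrix.mulVecLin_apply] using hmv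
    intro j
    have hc0 : c = 0 := hinj this
    rw [hc0]
    rfl
  -- the hypothesis in terms of η
  have hkey : ∀ j : Fin P, ∑ l : Fin P, u l * η j ^ q ^ (l : ℕ) = 0 := by
    intro j
    have hηpow : ∀ l : Fin P, η j ^ q ^ (l : ℕ) = ∑ i : Fin Po, G i j • (θ i ^ q ^ (l : ℕ)) := by
      intro l
      rw [hη]
      exact frob_sum_smul Fq F Finset.univ (fun i => G i j) θ (l : ℕ)
    have hj := h j
    have hj' : ∑ i : Fin Po, (∑ l : Fin P, u l * θ i ^ q ^ (l : ℕ)) * algebraMap Fq F (G i j)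
        = 0 := by
      rw [← sub_eq_zero] at hj
      rw [← hj]
      rw [← Finset.sum_sub_distrib]
      refine Finset.sum_congr rfl fun i _ => ?_
      rw [← sub_mul, ← Finset.sum_sub_distrib]
      congr 1
      refine Finset.sum_congr rfl fun l _ => ?_
      rw [hu]
      ring
    calc ∑ l : Fin P, u l * η j ^ q ^ (l : ℕ)
        = ∑ l : Fin P, ∑ i : Fin Po, G i j • (u l * θ i ^ q ^ (l : ℕ)) := by
          refine Finset.sum_congr rfl fun l _ => ?_
          rw [hηpow l, Finset.mul_sum]
          refine Finset.sum_congr rfl fun i _ => ?_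
          rw [mul_smul_comm]
      _ = ∑ i : Fin Po, (∑ l : Fin P, u l * θ i ^ q ^ (l : ℕ)) * algebraMap Fq F (G i j) := by
          rw [Finset.sum_comm]
          refine Finset.sum_congr rfl fun i _ => ?_
          rw [← Finset.smul_sum, Algebra.smul_def, mul_comm]
      _ = 0 := hj'
  have hu0 : u = 0 := key_lemma Fq F P u η hηli hkey
  funext l
  have : v l - w l = 0 := congrFun hu0 l
  exact sub_eq_zero.mp this
end

section
/- (Redundancy Reduction Lemma) Fix a demand vector d: I_K \to I_N, a transmission type t with support P' \cup \bar{P'} (P' the variable set), a set A \subseteq \cup_{n \in \bar{P'}} I^{[n]} with |A \cap I^{[n]}| = t_n for each n \in \bar{P'}, leaders \ell^{[n]} \in I^{[n]} for n \in P', the leader set L = \cup_{n\in P'}\{\ell^{[n]}\}, and sets Q_n \subseteq I^{[n]} \setminus \{\ell^{[n]}\} with |Q_n| = t_n, Q = \cup_{n \in P'} Q_n. Then, over \mathbb{F}_2, \bigoplus over all V \subseteq Q \cup L with |V \cap I^{[n]}| = t_n for all n \in P', of \bigoplus_{k \in V} W_{d_k, V \cup A \setminus \{k\}}, equals 0. 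-/
/-- Redundancy Reduction Lemma. Fix a demand vector `d`, a transmission type `tv` with
variable set `P'` and fixed set `Pbar`, a set `A` of users requesting files in `Pbar`
with `|A ∩ I^{[n]}| = tv n`, leaders `ℓ n ∈ I^{[n]}` and sets `Q n ⊆ I^{[n]} \ {ℓ n}`
with `|Q n| = tv n`.  Then, in characteristic two,
`⨁_{V ⊆ Q ∪ L, |V ∩ I^{[n]}| = tv n ∀ n ∈ P'} ⨁_{k ∈ V} W_{d_k, (V ∪ A) \ {k}} = 0`. -/
theorem redundancy_reduction {K N : ℕ} {M : Type*} [AddCommGroup M]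
    (h2 : ∀ x : M, x + x = 0)
    (d : Fin K → Fin N)
    (tv : Fin N → ℕ)
    (P' Pbar : Finset (Fin N)) (hPP : Disjoint P' Pbar)
    (htpos : ∀ n ∈ P', 1 ≤ tv n)
    (ℓ : Fin N → Fin K) (hℓ : ∀ n ∈ P', d (ℓ n) = n)
    (Q : Fin N → Finset (Fin K))
    (hQ : ∀ n ∈ P', Q n ⊆ (Finset.univ.filter (fun k => d k = n)).erase (ℓ n))
    (hQcard : ∀ n ∈ P', (Q n).card = tv n)
    (A : Finset (Fin K))
    (hA : A ⊆ Pbar.biUnion (fun n => Finset.univ.filter (fun k => d k = n)))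
    (hAcard : ∀ n ∈ Pbar, (A ∩ Finset.univ.filter (fun k => d k = n)).card = tv n)
    (W : Fin N → Finset (Fin K) → M) :
    ∑ V ∈ ((P'.biUnion (fun n => insert (ℓ n) (Q n))).powerset.filter
        (fun V => ∀ n ∈ P', (V ∩ Finset.univ.filter (fun k => d k = n)).card = tv n)),
      ∑ k ∈ V, W (d k) ((V ∪ A).erase k) = 0 := by
  classical
  set I : Fin N → Finset (Fin K) := fun n => Finset.univ.filter (fun k => d k = n) with hI
  set T : Fin N → Finset (Fin K) := fun n => insert (ℓ n) (Q n) with hT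
  set s : Finset (Finset (Fin K)) :=
    ((P'.biUnion T).powerset.filter (fun V => ∀ n ∈ P', (V ∩ I n).card = tv n)) with hs
  -- basic facts
  have hTI : ∀ n ∈ P', T n ⊆ I n := by
    intro n hn x hx
    simp only [hT, Finset.mem_insert] at hx
    rcases hx with rfl | hx
    · simp [hI, hℓ n hn]
    · exact Finset.mem_of_mem_erase (hQ n hn hx)
  have hdT : ∀ x n, n ∈ P' → x ∈ T n → d x = n := by
    intro x n hn hx
    have := hTI n hn hx
    simpa [hI] using this
  have hAT : ∀ n ∈ P', ∀ a ∈ A, a ∉ T n := by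
    intro n hn a ha hat
    have h1 : d a = n := hdT a n hn hat
    have h2 : d a ∈ Pbar := by
      obtain ⟨m, hm, hma⟩ := Finset.mem_biUnion.mp (hA ha)
      have : d a = m := by simpa [hI] using hma
      exact this ▸ hm
    exact (Finset.disjoint_left.mp hPP hn) (h1 ▸ h2)
  have hTcard : ∀ n ∈ P', (T n).card = tv n + 1 := by
    intro n hn
    have hℓQ : ℓ n ∉ Q n := fun h => (Finset.mem_erase.mp (hQ n hn h)).1 rfl
    simp [hT, Finset.card_insert_of_notMem hℓQ, hQcard n hn]
  have hVT : ∀ V ∈ s, ∀ k ∈ V, d k ∈ P' ∧ k ∈ T (d k) := by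
    intro V hV k hk
    have hVsub : V ⊆ P'.biUnion T := Finset.mem_powerset.mp (Finset.mem_filter.mp hV).1
    obtain ⟨m, hm, hkm⟩ := Finset.mem_biUnion.mp (hVsub hk)
    have hdk : d k = m := hdT k m hm hkm
    exact ⟨hdk ▸ hm, hdk ▸ hkm⟩
  have hfilter : ∀ (X : Finset (Fin K)) m, X ∩ I m = X.filter (fun k => d k = m) := by
    intro X m
    ext x
    simp [hI, and_comm]
  have hdiff : ∀ V ∈ s, ∀ k ∈ V, (T (d k) \ V).card = 1 := by
    intro V hV k hk
    obtain ⟨hkP, hkT⟩ := hVT V hV k hk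
    have h1 : (T (d k) \ V).card + (T (d k) ∩ V).card = (T (d k)).card :=
      Finset.card_sdiff_add_card_inter _ _
    have h2 : T (d k) ∩ V = V ∩ T (d k) := Finset.inter_comm _ _
    have h3 : V ∩ T (d k) = V ∩ I (d k) := by
      apply Finset.Subset.antisymm
      · exact Finset.inter_subset_inter_left (hTI _ hkP)
      · intro x hx
        rcases Finset.mem_inter.mp hx with ⟨hxV, hxI⟩
        have hdx : d x = d k := by simpa [hI] using hxI
        have := (hVT V hV x hxV).2
        exact Finset.mem_inter.mpr ⟨hxV, hdx ▸ this⟩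
    have h4 : (V ∩ I (d k)).card = tv (d k) := (Finset.mem_filter.mp hV).2 _ hkP
    have h5 := hTcard _ hkP
    rw [h2, h3, h4, h5] at h1
    omega
  rw [Finset.sum_sigma']
  have key : ∀ p : (Σ _ : Finset (Fin K), Fin K), p ∈ s.sigma (fun V => V) →
      ∃ a, T (d p.2) \ p.1 = {a} := by
    intro p hp
    obtain ⟨hV, hk⟩ := Finset.mem_sigma.mp hp
    exact Finset.card_eq_one.mp (hdiff p.1 hV p.2 hk)
  choose ksw hksw using key
  have hksw_mem : ∀ p hp, ksw p hp ∈ T (d p.2) ∧ ksw p hp ∉ p.1 := by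
    intro p hp
    have : ksw p hp ∈ T (d p.2) \ p.1 := by rw [hksw p hp]; exact Finset.mem_singleton_self _
    exact Finset.mem_sdiff.mp this
  refine Finset.sum_involution
    (fun p hp => ⟨insert (ksw p hp) (p.1.erase p.2), ksw p hp⟩) ?_ ?_ ?_ ?_
  · -- terms cancel
    intro p hp
    obtain ⟨V, k⟩ := p
    obtain ⟨hV, hk⟩ := Finset.mem_sigma.mp hp
    replace hV : V ∈ s := hV
    replace hk : k ∈ V := hk
    set a := ksw ⟨V, k⟩ hp with ha
    obtain ⟨haT, haV⟩ := hksw_mem ⟨V, k⟩ hp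
    replace haT : a ∈ T (d k) := haT
    replace haV : a ∉ V := haV
    obtain ⟨hkP, hkT⟩ := hVT V hV k hk
    have hda : d a = d k := hdT a (d k) hkP haT
    have hkA : k ∉ A := fun h => hAT (d k) hkP k h hkT
    have haA : a ∉ A := fun h => hAT (d k) hkP a h haT
    have hnot : a ∉ V.erase k ∪ A := by
      simp only [Finset.mem_union]
      rintro (h | h)
      · exact haV (Finset.mem_of_mem_erase h)
      · exact haA h
    have hset : ((insert a (V.erase k)) ∪ A).erase a = (V ∪ A).erase k := by
      rw [Finset.insert_union, Finset.erase_insert hnot, Finset.erase_union_distrib,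
        Finset.erase_eq_of_notMem hkA]
    show W (d k) ((V ∪ A).erase k) + W (d a) ((insert a (V.erase k) ∪ A).erase a) = 0
    rw [hda, hset]
    exact h2 _
  · -- not a fixed point
    intro p hp _
    obtain ⟨V, k⟩ := p
    obtain ⟨hV, hk⟩ := Finset.mem_sigma.mp hp
    replace hV : V ∈ s := hV
    replace hk : k ∈ V := hk
    obtain ⟨haT, haV⟩ := hksw_mem ⟨V, k⟩ hp
    replace haV : ksw ⟨V, k⟩ hp ∉ V := haV
    intro heq
    have : ksw ⟨V, k⟩ hp = k := congrArg Sigma.snd heq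
    rw [this] at haV
    exact haV hk
  · -- maps into the index set
    intro p hp
    obtain ⟨V, k⟩ := p
    obtain ⟨hV, hk⟩ := Finset.mem_sigma.mp hp
    replace hV : V ∈ s := hV
    replace hk : k ∈ V := hk
    set a := ksw ⟨V, k⟩ hp with ha
    obtain ⟨haT, haV⟩ := hksw_mem ⟨V, k⟩ hp
    replace haT : a ∈ T (d k) := haT
    replace haV : a ∉ V := haV
    obtain ⟨hkP, hkT⟩ := hVT V hV k hk
    have hda : d a = d k := hdT a (d k) hkP haT
    refine Finset.mem_sigma.mpr ⟨?_, Finset.mem_insert_self _ _⟩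
    obtain ⟨hVsub', hVcard⟩ := Finset.mem_filter.mp hV
    have hVsub : V ⊆ P'.biUnion T := Finset.mem_powerset.mp hVsub'
    refine Finset.mem_filter.mpr ⟨Finset.mem_powerset.mpr ?_, ?_⟩
    · intro x hx
      rcases Finset.mem_insert.mp hx with rfl | hx
      · exact Finset.mem_biUnion.mpr ⟨d k, hkP, haT⟩
      · exact hVsub (Finset.mem_of_mem_erase hx)
    · intro m hm
      rw [hfilter]
      by_cases hmn : m = d k
      · rw [Finset.filter_insert, if_pos (hda.trans hmn.symm), Finset.filter_erase]
        have hkmem : k ∈ V.filter (fun x => d x = m) := Finset.mem_filter.mpr ⟨hk, hmn.symm⟩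
        have hanot : a ∉ (V.filter (fun x => d x = m)).erase k :=
          fun h => haV (Finset.filter_subset _ _ (Finset.mem_of_mem_erase h))
        rw [Finset.card_insert_of_notMem hanot, Finset.card_erase_of_mem hkmem]
        have hc : (V.filter (fun x => d x = m)).card = tv m := by
          rw [← hfilter]; exact hVcard m hm
        have := htpos m hm
        omega
      · rw [Finset.filter_insert, if_neg (fun h => hmn (hda.symm.trans h).symm),
          Finset.filter_erase, Finset.erase_eq_of_notMem
            (fun h => hmn (Finset.mem_filter.mp h).2.symm)]
        rw [← hfilter]; exact hVcard m hm
  · -- involution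
    intro p hp
    obtain ⟨V, k⟩ := p
    obtain ⟨hV, hk⟩ := Finset.mem_sigma.mp hp
    replace hV : V ∈ s := hV
    replace hk : k ∈ V := hk
    set a := ksw ⟨V, k⟩ hp with ha
    obtain ⟨haT, haV⟩ := hksw_mem ⟨V, k⟩ hp
    replace haT : a ∈ T (d k) := haT
    replace haV : a ∉ V := haV
    obtain ⟨hkP, hkT⟩ := hVT V hV k hk
    have hda : d a = d k := hdT a (d k) hkP haT
    have hsing : T (d k) \ V = {a} := hksw ⟨V, k⟩ hp
    have hTV' : T (d a) \ (insert a (V.erase k)) = {k} := by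
      rw [hda]
      apply Finset.Subset.antisymm
      · intro x hx
        obtain ⟨hxT, hxI⟩ := Finset.mem_sdiff.mp hx
        have hxa : x ≠ a := fun h => hxI (h ▸ Finset.mem_insert_self _ _)
        have hxV : x ∈ V := by
          by_contra hxV
          have : x ∈ T (d k) \ V := Finset.mem_sdiff.mpr ⟨hxT, hxV⟩
          rw [hsing] at this
          exact hxa (Finset.mem_singleton.mp this)
        have hxk : x = k := by
          by_contra hxk
          exact hxI (Finset.mem_insert_of_mem (Finset.mem_erase.mpr ⟨hxk, hxV⟩))
        exact Finset.mem_singleton.mpr hxk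
      · intro x hx
        rw [Finset.mem_singleton] at hx
        subst hx
        refine Finset.mem_sdiff.mpr ⟨hkT, ?_⟩
        intro h
        rcases Finset.mem_insert.mp h with h | h
        · exact haV (h ▸ hk)
        · exact (Finset.mem_erase.mp h).1 rfl
    have hkq : ∀ hq, ksw ⟨insert a (V.erase k), a⟩ hq = k := by
      intro hq
      have h1 := hksw ⟨insert a (V.erase k), a⟩ hq
      simp only at h1
      rw [hTV'] at h1
      exact (Finset.singleton_inj.mp h1).symm
    show (⟨insert (ksw ⟨insert a (V.erase k), a⟩ _) ((insert a (V.erase k)).erase a),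
        ksw ⟨insert a (V.erase k), a⟩ _⟩ : Σ _ : Finset (Fin K), Fin K) = ⟨V, k⟩
    rw [hkq, Finset.erase_insert (fun h => haV (Finset.mem_of_mem_erase h)),
      Finset.insert_erase hk]
end

section
/- (Separation Lemma) Fix a demand vector d and for each file n with m_n > 0 let I^{[n]} be the set of users requesting n. For a transmission type \vec{t}, a partition block P' \subseteq supp(\vec{t}), and a set A \subseteq \cup_{n \in supp(\vec{t}) \setminus P'} I^{[n]} with |A \cap I^{[n]}| = t_n for all n in supp(\vec{t}) \setminus P', define W_{d, \vec{t}, P', A} as the set of symbols W_{d_k, A \cup B \setminus \{k\}} over all B \subseteq \cup_{n \in P'} I^{[n]} with |B \cap I^{[n]}| = t_n for all n \in P' and all k with d_k \in P'. Then for any two distinct triples (\vec{t}', P'', A') \ne (\vec{t}'', P''', A'') satisfying these constraints (with P'' a block of the decomposition pattern for \vec{t}' and P''' for \vec{t}''), the sets W_{d,\vec{t}',P'',A'} and W_{d,\vec{t}'',P''',A''} are disjoint. -/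
/-- The set of symbols `W_{d_k, (A ∪ B) \ {k}}` associated with a demand vector `d`,
transmission type `tv`, partition block `P`, and fixed user set `A`; a symbol is
uniquely indexed by the pair (file index, subset of users). -/
def Wset {K N : ℕ} (d : Fin K → Fin N) (Iu : Fin N → Finset (Fin K))
    (tv : Fin N → ℕ) (P : Finset (Fin N)) (A : Finset (Fin K)) :
    Set (Fin N × Finset (Fin K)) :=
  {p | ∃ B : Finset (Fin K), B ⊆ P.biUnion Iu ∧ (∀ n ∈ P, (B ∩ Iu n).card = tv n) ∧
      ∃ k ∈ B, d k ∈ P ∧ p = (d k, (A ∪ B).erase k)}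

lemma aux_t {K N : ℕ} (d : Fin K → Fin N) (Iu : Fin N → Finset (Fin K))
    (hI : ∀ n, Iu n = Finset.univ.filter (fun k => d k = n))
    (t : Fin N → ℕ) (P : Finset (Fin N)) (A B : Finset (Fin K)) (k : Fin K)
    (hA : A ⊆ (Finset.univ.filter (fun n => t n ≠ 0) \ P).biUnion Iu)
    (hAcard : ∀ n, t n ≠ 0 → n ∉ P → (A ∩ Iu n).card = t n)
    (hBsub : B ⊆ P.biUnion Iu) (hBcard : ∀ n ∈ P, (B ∩ Iu n).card = t n)
    (hk : k ∈ B) (i : Fin N) :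
    t i = (((A ∪ B).erase k) ∩ Iu i).card + (if i = d k then 1 else 0) := by
  have memIu : ∀ (a : Fin K) (j : Fin N), a ∈ Iu j ↔ d a = j := by
    intro a j; rw [hI j]; simp
  have hdA : ∀ a ∈ A, d a ∉ P ∧ t (d a) ≠ 0 := by
    intro a ha
    obtain ⟨m, hm, ham⟩ := Finset.mem_biUnion.mp (hA ha)
    rw [memIu] at ham
    simp only [Finset.mem_sdiff, Finset.mem_filter] at hm
    exact ham ▸ ⟨hm.2, hm.1.2⟩
  have hdB : ∀ a ∈ B, d a ∈ P := by
    intro a ha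
    obtain ⟨m, hm, ham⟩ := Finset.mem_biUnion.mp (hBsub ha)
    rw [memIu] at ham; exact ham ▸ hm
  have hunion : ((A ∪ B) ∩ Iu i).card = t i := by
    rw [Finset.union_inter_distrib_right]
    by_cases hiP : i ∈ P
    · have hAe : A ∩ Iu i = ∅ := by
        ext a; simp only [Finset.mem_inter, memIu, Finset.notMem_empty, iff_false, not_and]
        rintro ha rfl; exact (hdA a ha).1 hiP
      rw [hAe, Finset.empty_union, hBcard i hiP]
    · have hBe : B ∩ Iu i = ∅ := by
        ext a; simp only [Finset.mem_inter, memIu, Finset.notMem_empty, iff_false, not_and]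
        rintro ha rfl; exact hiP (hdB a ha)
      rw [hBe, Finset.union_empty]
      by_cases hti : t i = 0
      · have hAe : A ∩ Iu i = ∅ := by
          ext a; simp only [Finset.mem_inter, memIu, Finset.notMem_empty, iff_false, not_and]
          rintro ha rfl; exact (hdA a ha).2 hti
        rw [hAe, hti]; rfl
      · exact hAcard i hti hiP
  have hkU : k ∈ A ∪ B := Finset.mem_union_right _ hk
  by_cases hik : i = d k
  · subst hik
    have hkI : k ∈ Iu (d k) := (memIu k (d k)).mpr rfl
    have h1 : (A ∪ B) ∩ Iu (d k) = insert k (((A ∪ B).erase k) ∩ Iu (d k)) := by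
      conv_lhs => rw [← Finset.insert_erase hkU]
      rw [Finset.insert_inter_of_mem hkI]
    have h2 : k ∉ ((A ∪ B).erase k) ∩ Iu (d k) := by
      simp [Finset.mem_erase]
    rw [← hunion, h1, Finset.card_insert_of_notMem h2]
    simp
  · have h1 : ((A ∪ B).erase k) ∩ Iu i = (A ∪ B) ∩ Iu i := by
      ext a
      simp only [Finset.mem_inter, Finset.mem_erase]
      constructor
      · rintro ⟨⟨_, h⟩, h'⟩; exact ⟨h, h'⟩
      · rintro ⟨h, h'⟩
        refine ⟨⟨?_, h⟩, h'⟩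
        rintro rfl
        exact hik ((memIu a i).mp h').symm
    rw [h1, hunion]; simp [hik]

lemma aux_A {K N : ℕ} (d : Fin K → Fin N) (Iu : Fin N → Finset (Fin K))
    (hI : ∀ n, Iu n = Finset.univ.filter (fun k => d k = n))
    (t : Fin N → ℕ) (P : Finset (Fin N)) (A B : Finset (Fin K)) (k : Fin K)
    (hA : A ⊆ (Finset.univ.filter (fun n => t n ≠ 0) \ P).biUnion Iu)
    (hBsub : B ⊆ P.biUnion Iu) (hkP : d k ∈ P) :
    A = ((A ∪ B).erase k).filter (fun a => d a ∉ P) := by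
  have memIu : ∀ (a : Fin K) (j : Fin N), a ∈ Iu j ↔ d a = j := by
    intro a j; rw [hI j]; simp
  have hdA : ∀ a ∈ A, d a ∉ P := by
    intro a ha
    obtain ⟨m, hm, ham⟩ := Finset.mem_biUnion.mp (hA ha)
    rw [memIu] at ham
    simp only [Finset.mem_sdiff, Finset.mem_filter] at hm
    exact ham ▸ hm.2
  have hdB : ∀ a ∈ B, d a ∈ P := by
    intro a ha
    obtain ⟨m, hm, ham⟩ := Finset.mem_biUnion.mp (hBsub ha)
    rw [memIu] at ham; exact ham ▸ hm
  ext a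
  simp only [Finset.mem_filter, Finset.mem_erase, Finset.mem_union]
  constructor
  · intro ha
    have haP := hdA a ha
    refine ⟨⟨?_, Or.inl ha⟩, haP⟩
    rintro rfl; exact haP hkP
  · rintro ⟨⟨_, hab⟩, haP⟩
    rcases hab with h | h
    · exact h
    · exact absurd (hdB a h) haP

/-- Separation Lemma: for two distinct triples (transmission type, partition block,
fixed user set) satisfying the validity constraints, the corresponding symbol sets are
disjoint. -/
theorem separation {K N : ℕ} (d : Fin K → Fin N)
    (Iu : Fin N → Finset (Fin K))
    (hI : ∀ n, Iu n = Finset.univ.filter (fun k => d k = n))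
    (t' t'' : Fin N → ℕ) (P₁ P₂ : Finset (Fin N)) (A₁ A₂ : Finset (Fin K))
    (hP₁ : ∀ n ∈ P₁, 1 ≤ t' n)
    (ht₁ : ∀ n, t' n ≤ (Iu n).card)
    (hA₁ : A₁ ⊆ (Finset.univ.filter (fun n => t' n ≠ 0) \ P₁).biUnion Iu)
    (hA₁card : ∀ n, t' n ≠ 0 → n ∉ P₁ → (A₁ ∩ Iu n).card = t' n)
    (hP₂ : ∀ n ∈ P₂, 1 ≤ t'' n)
    (ht₂ : ∀ n, t'' n ≤ (Iu n).card)
    (hA₂ : A₂ ⊆ (Finset.univ.filter (fun n => t'' n ≠ 0) \ P₂).biUnion Iu)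
    (hA₂card : ∀ n, t'' n ≠ 0 → n ∉ P₂ → (A₂ ∩ Iu n).card = t'' n)
    (hblocks : t' = t'' → P₁ = P₂ ∨ Disjoint P₁ P₂)
    (hne : (t', P₁, A₁) ≠ (t'', P₂, A₂)) :
    Disjoint (Wset d Iu t' P₁ A₁) (Wset d Iu t'' P₂ A₂) := by
  rw [Set.disjoint_left]
  rintro ⟨n, C⟩ ⟨B₁, hB₁sub, hB₁card, k₁, hk₁B, hk₁P, hp₁⟩
    ⟨B₂, hB₂sub, hB₂card, k₂, hk₂B, hk₂P, hp₂⟩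
  obtain ⟨hn₁, hC₁⟩ := Prod.mk.inj hp₁
  obtain ⟨hn₂, hC₂⟩ := Prod.mk.inj hp₂
  have hdk : d k₁ = d k₂ := hn₁ ▸ hn₂
  have ht : t' = t'' := by
    funext i
    have h1 := aux_t d Iu hI t' P₁ A₁ B₁ k₁ hA₁ hA₁card hB₁sub hB₁card hk₁B i
    have h2 := aux_t d Iu hI t'' P₂ A₂ B₂ k₂ hA₂ hA₂card hB₂sub hB₂card hk₂B i
    rw [← hC₁] at h1
    rw [← hC₂] at h2
    rw [h1, h2, hdk]
  have hPP : P₁ = P₂ := by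
    rcases hblocks ht with h | h
    · exact h
    · exact absurd (Finset.mem_inter.mpr ⟨hk₁P, hdk ▸ hk₂P⟩)
        (by rw [Finset.disjoint_iff_inter_eq_empty] at h; simp [h])
  have hAA : A₁ = A₂ := by
    have h1 := aux_A d Iu hI t' P₁ A₁ B₁ k₁ hA₁ hB₁sub hk₁P
    have h2 := aux_A d Iu hI t'' P₂ A₂ B₂ k₂ hA₂ hB₂sub hk₂P
    rw [← hC₁] at h1
    rw [← hC₂] at h2
    rw [h1, h2, hPP]
  exact hne (by rw [ht, hPP, hAA])
end

section
/- With no decomposition (each transmission type's partition being the single block supp(\vec{t})), the delivery rate formula R_{d,P} = \sum_{\vec{t}} [\prod_{n \in supp(\vec{t})} \binom{m_n}{t_n} - \prod_{n \in supp(\vec{t})} \binom{m_n-1}{t_n}] equals \binom{K}{t+1} - \binom{K-N^*}{t+1}, where the sum is over all transmission types \vec{t} with t_n \le m_n and \sum_n t_n = t+1, m_n are the demand multiplicities summing to K, and N^* = |\{n: m_n > 0\}|. -/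
open Finset


lemma vander : ∀ (N : ℕ) (a : Fin N → ℕ) (s : ℕ),
    ∑ v ∈ (Fintype.piFinset fun n => Finset.range (a n + 1)).filter
        (fun v => ∑ n, v n = s), ∏ n, (a n).choose (v n) = (∑ n, a n).choose s := by
  intro N
  induction N with
  | zero =>
    intro a s
    rcases s with _ | s <;> simp
  | succ N ih =>
    intro a s
    have hpi : (Fintype.piFinset fun n : Fin (N+1) => Finset.range (a n + 1)) =
        ((Finset.range (a 0 + 1)) ×ˢ
          Fintype.piFinset (fun i : Fin N => Finset.range (a i.succ + 1))).map
          (Fin.consEquiv fun _ : Fin (N+1) => ℕ).toEmbedding := by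
      have := Finset.filter_piFinset_eq_map_consEquiv
        (α := fun _ : Fin (N+1) => ℕ) (fun n => Finset.range (a n + 1))
        (fun _ => True)
      simp at this; exact this
    rw [Finset.sum_filter, hpi, Finset.sum_map, Finset.sum_product]
    have step : ∀ x ∈ Finset.range (a 0 + 1),
        (∑ w ∈ Fintype.piFinset (fun i : Fin N => Finset.range (a i.succ + 1)),
          if (∑ n, ((Fin.consEquiv fun _ : Fin (N+1) => ℕ).toEmbedding (x, w)) n = s)
          then ∏ n, (a n).choose (((Fin.consEquiv fun _ : Fin (N+1) => ℕ).toEmbedding (x, w)) n)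
          else 0)
        = (a 0).choose x * (if x ≤ s then (∑ i : Fin N, a i.succ).choose (s - x) else 0) := by
      intro x _
      have hc : ∀ w : Fin N → ℕ,
          ((Fin.consEquiv fun _ : Fin (N+1) => ℕ).toEmbedding (x, w)) = Fin.cons x w := by
        intro w; rfl
      simp only [hc]
      by_cases hx : x ≤ s
      · rw [if_pos hx, ← ih (fun i => a i.succ) (s - x), Finset.sum_filter, Finset.mul_sum]
        refine Finset.sum_congr rfl fun w _ => ?_
        have hsum : ∑ n, (Fin.cons x w : Fin (N+1) → ℕ) n = x + ∑ i : Fin N, w i := by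
          rw [Fin.sum_univ_succ]; simp
        have hprod : ∏ n, (a n).choose ((Fin.cons x w : Fin (N+1) → ℕ) n)
            = (a 0).choose x * ∏ i : Fin N, (a i.succ).choose (w i) := by
          rw [Fin.prod_univ_succ]; simp
        rw [hsum, hprod]
        by_cases h : x + ∑ i : Fin N, w i = s
        · rw [if_pos h, if_pos (by omega)]
        · rw [if_neg h, if_neg (by omega), mul_zero]
      · rw [if_neg hx, mul_zero]
        refine Finset.sum_eq_zero fun w _ => ?_
        have hsum : ∑ n, (Fin.cons x w : Fin (N+1) → ℕ) n = x + ∑ i : Fin N, w i := by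
          rw [Fin.sum_univ_succ]; simp
        rw [hsum, if_neg (by omega)]
    rw [Finset.sum_congr rfl step]
    have hA : (∑ n, a n) = a 0 + ∑ i : Fin N, a i.succ := by rw [Fin.sum_univ_succ]
    rw [hA, Nat.add_choose_eq, Finset.Nat.sum_antidiagonal_eq_sum_range_succ_mk]
    -- both sums equal sum over range (a 0 + s + 2)
    set A := ∑ i : Fin N, a i.succ
    have h1 : ∑ x ∈ Finset.range (a 0 + 1),
        (a 0).choose x * (if x ≤ s then A.choose (s - x) else 0)
        = ∑ x ∈ Finset.range (a 0 + s + 2),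
        (a 0).choose x * (if x ≤ s then A.choose (s - x) else 0) := by
      refine Finset.sum_subset (Finset.range_subset_range.2 (by omega)) fun x _ hx => ?_
      rw [Finset.mem_range, not_lt] at hx
      rw [Nat.choose_eq_zero_of_lt (by omega), zero_mul]
    have h2 : ∑ x ∈ Finset.range (s + 1), (a 0).choose x * A.choose (s - x)
        = ∑ x ∈ Finset.range (a 0 + s + 2),
        (a 0).choose x * (if x ≤ s then A.choose (s - x) else 0) := by
      have e1 : ∑ x ∈ Finset.range (s + 1), (a 0).choose x * A.choose (s - x)
          = ∑ x ∈ Finset.range (s + 1),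
            (a 0).choose x * (if x ≤ s then A.choose (s - x) else 0) := by
        refine Finset.sum_congr rfl fun x hx => ?_
        rw [Finset.mem_range] at hx
        rw [if_pos (by omega)]
      rw [e1]
      refine Finset.sum_subset (Finset.range_subset_range.2 (by omega)) fun x _ hx => ?_
      rw [Finset.mem_range, not_lt] at hx
      rw [if_neg (by omega), mul_zero]
    rw [h1, h2]


/-- With no decomposition, the delivery rate
`∑_{t⃗} [∏_{n ∈ supp(t⃗)} C(m_n,t_n) - ∏_{n ∈ supp(t⃗)} C(m_n-1,t_n)]`
equals `C(K, t+1) - C(K - N*, t+1)`, recovering the Yu–Maddah-Ali–Avestimehr rate. -/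
theorem rate_no_decomposition (N K t : ℕ) (m : Fin N → ℕ)
    (hm : ∑ n, m n = K) (ht : t ≤ K) :
    ∑ v ∈ (Fintype.piFinset fun n => Finset.range (m n + 1)).filter
        (fun v => ∑ n, v n = t + 1),
      ((∏ n ∈ Finset.univ.filter (fun n => v n ≠ 0), ((m n).choose (v n) : ℤ)) -
        ∏ n ∈ Finset.univ.filter (fun n => v n ≠ 0), (((m n - 1).choose (v n) : ℤ)))
      = (K.choose (t + 1) : ℤ)
        - ((K - (Finset.univ.filter (fun n => 0 < m n)).card).choose (t + 1) : ℤ) := by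
  have hfull : ∀ (a : Fin N → ℕ) (v : Fin N → ℕ),
      (∏ n ∈ Finset.univ.filter (fun n => v n ≠ 0), ((a n).choose (v n) : ℤ))
        = ∏ n, ((a n).choose (v n) : ℤ) := by
    intro a v
    rw [Finset.prod_filter]
    refine Finset.prod_congr rfl fun n _ => ?_
    by_cases h : v n = 0 <;> simp [h]
  rw [Finset.sum_sub_distrib]
  have h1 : ∑ v ∈ (Fintype.piFinset fun n => Finset.range (m n + 1)).filter
        (fun v => ∑ n, v n = t + 1),
      (∏ n ∈ Finset.univ.filter (fun n => v n ≠ 0), ((m n).choose (v n) : ℤ))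
      = (K.choose (t + 1) : ℤ) := by
    rw [Finset.sum_congr rfl fun v _ => hfull m v, ← hm, ← vander N m (t + 1)]
    push_cast
    rfl
  have hB : ∑ v ∈ (Fintype.piFinset fun n => Finset.range (m n + 1)).filter
        (fun v => ∑ n, v n = t + 1), ∏ n, (m n - 1).choose (v n)
      = (∑ n, (m n - 1)).choose (t + 1) := by
    rw [← vander N (fun n => m n - 1) (t + 1)]
    symm
    refine Finset.sum_subset ?_ fun v hv hv' => ?_
    · apply Finset.filter_subset_filter
      apply Fintype.piFinset_subset
      intro n
      exact Finset.range_subset_range.2 (Nat.succ_le_succ (Nat.sub_le _ _))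
    rw [Finset.mem_filter] at hv hv'
    have hmem := hv.1
    rw [Fintype.mem_piFinset] at hmem
    have : ¬ v ∈ Fintype.piFinset fun n => Finset.range (m n - 1 + 1) := by
      intro h; exact hv' ⟨h, hv.2⟩
    rw [Fintype.mem_piFinset] at this
    push_neg at this
    obtain ⟨n, hn⟩ := this
    rw [Finset.mem_range, not_lt] at hn
    exact Finset.prod_eq_zero (Finset.mem_univ n) (Nat.choose_eq_zero_of_lt (Nat.lt_of_succ_le hn))
  have hs : ∑ n, (m n - 1) + (Finset.univ.filter fun n => 0 < m n).card = K := by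
    rw [Finset.card_filter, ← Finset.sum_add_distrib, ← hm]
    refine Finset.sum_congr rfl fun n _ => ?_
    by_cases h : 0 < m n
    · simp only [h, if_pos]
      exact Nat.succ_pred_eq_of_pos h
    · simp [Nat.eq_zero_of_not_pos h]
  have h2 : ∑ v ∈ (Fintype.piFinset fun n => Finset.range (m n + 1)).filter
        (fun v => ∑ n, v n = t + 1),
      (∏ n ∈ Finset.univ.filter (fun n => v n ≠ 0), (((m n - 1).choose (v n) : ℤ)))
      = ((K - (Finset.univ.filter (fun n => 0 < m n)).card).choose (t + 1) : ℤ) := by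
    rw [Finset.sum_congr rfl fun v _ => hfull (fun n => m n - 1) v,
      show K - (Finset.univ.filter fun n => 0 < m n).card = ∑ n, (m n - 1) by rw [← hs]; exact Nat.add_sub_cancel _ _, ← hB]
    push_cast
    rfl
  rw [h1, h2]
end

section
/- For nonnegative integers m_1,...,m_N with \sum_n m_n = K, N^* = |\{n: m_n>0\}|, and 0 \le t \le K-1: the sum over all transmission types \vec{t} (0 \le t_n \le m_n, \sum_n t_n = t+1) of \sum_{n \in supp(\vec{t})} \binom{m_n-1}{t_n-1} \prod_{n' \in supp(\vec{t}) \setminus \{n\}} \binom{m_{n'}}{t_{n'}} equals N^* \binom{K-1}{t}. -/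
open Polynomial Finset

lemma vandermonde (N t : ℕ) (a : Fin N → ℕ) :
    ∑ v ∈ Fintype.piFinset (fun n => Finset.range (a n + 1)),
      (if ∑ n, v n = t then ∏ n, (a n).choose (v n) else 0) = (∑ n, a n).choose t := by
  have expand : ∀ n : ℕ, ((X + 1 : Polynomial ℕ)) ^ n =
      ∑ j ∈ Finset.range (n + 1), C (n.choose j) * X ^ j := by
    intro n
    rw [add_pow]
    refine Finset.sum_congr rfl fun j hj => ?_
    simp [C_eq_natCast, mul_comm]
  have key : ((X + 1 : Polynomial ℕ)) ^ (∑ n, a n) =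
      ∑ v ∈ Fintype.piFinset (fun n => Finset.range (a n + 1)),
        C (∏ n, (a n).choose (v n)) * X ^ (∑ n, v n) := by
    rw [← Finset.prod_pow_eq_pow_sum]
    calc ∏ n, (X + 1 : Polynomial ℕ) ^ (a n)
        = ∏ n, ∑ j ∈ Finset.range (a n + 1), C ((a n).choose j) * X ^ j := by
          exact Finset.prod_congr rfl fun n _ => expand (a n)
      _ = ∑ v ∈ Fintype.piFinset (fun n => Finset.range (a n + 1)),
            ∏ n, C ((a n).choose (v n)) * X ^ (v n) := Finset.prod_univ_sum _ _
      _ = _ := by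
          refine Finset.sum_congr rfl fun v _ => ?_
          rw [Finset.prod_mul_distrib, Finset.prod_pow_eq_pow_sum, ← map_prod]
  have := congrArg (fun p => Polynomial.coeff p t) key
  simp only [coeff_X_add_one_pow, Nat.cast_id, finset_sum_coeff, coeff_C_mul,
    coeff_X_pow] at this
  rw [this]
  refine Finset.sum_congr rfl fun v _ => ?_
  rcases eq_or_ne (∑ n, v n) t with h | h
  · simp [h]
  · simp [h, Ne.symm h]

/-- Delivery rate of the fully decomposed (singleton-partition) scheme:
`∑_{t⃗} ∑_{n ∈ supp(t⃗)} C(m_n-1, t_n-1) ∏_{n' ∈ supp(t⃗) \ {n}} C(m_{n'}, t_{n'})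
 = N* · C(K-1, t)` where `N* = |{n : m_n > 0}|` and `∑ m_n = K`. -/
theorem rate_full_decomposition (N K t : ℕ) (m : Fin N → ℕ)
    (hm : ∑ n, m n = K) (ht : t < K) :
    ∑ v ∈ (Fintype.piFinset fun n => Finset.range (m n + 1)).filter
        (fun v => ∑ n, v n = t + 1),
      ∑ n ∈ Finset.univ.filter (fun n => v n ≠ 0),
        (m n - 1).choose (v n - 1) *
          ∏ n' ∈ (Finset.univ.filter (fun n' => v n' ≠ 0)).erase n, (m n').choose (v n')
      = (Finset.univ.filter (fun n => 0 < m n)).card * (K - 1).choose t := by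
  classical
  set S := (Fintype.piFinset fun n => Finset.range (m n + 1)).filter
      (fun v => ∑ n, v n = t + 1) with hS
  -- Step 1: replace the product over the filtered-erase set by product over univ.erase n
  have step1 : ∀ v ∈ S, ∀ n : Fin N,
      ∏ n' ∈ (Finset.univ.filter (fun n' => v n' ≠ 0)).erase n, (m n').choose (v n')
        = ∏ n' ∈ Finset.univ.erase n, (m n').choose (v n') := by
    intro v _ n
    refine Finset.prod_subset ?_ ?_
    · intro x hx
      simp only [Finset.mem_erase, Finset.mem_filter] at hx
      simp [hx.1]
    · intro x hx hnx
      simp only [Finset.mem_erase, Finset.mem_filter, Finset.mem_univ, true_and,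
        not_and, not_not] at hx hnx
      rw [hnx hx.1, Nat.choose_zero_right]
  have key : ∀ n : Fin N,
      ∑ v ∈ S, (if v n ≠ 0 then
          (m n - 1).choose (v n - 1) * ∏ n' ∈ Finset.univ.erase n, (m n').choose (v n')
        else 0) = if 0 < m n then (K - 1).choose t else 0 := by
    intro n
    by_cases h : 0 < m n
    · rw [if_pos h]
      set a : Fin N → ℕ := Function.update m n (m n - 1) with ha
      have hsplitm : ∑ i, m i = m n + ∑ i ∈ Finset.univ.erase n, m i :=
        (Finset.add_sum_erase _ m (Finset.mem_univ n)).symm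
      have hsa : ∑ i, a i = K - 1 := by
        rw [ha, Finset.sum_update_of_mem (Finset.mem_univ n), Finset.sdiff_singleton_eq_erase]
        omega
      rw [← hsa, ← vandermonde N t a, ← Finset.sum_filter, ← Finset.sum_filter, hS,
        Finset.filter_filter]
      refine Finset.sum_nbij' (fun v => Function.update v n (v n - 1))
        (fun w => Function.update w n (w n + 1)) ?_ ?_ ?_ ?_ ?_
      · intro v hv
        simp only [Finset.mem_filter, Fintype.mem_piFinset, Finset.mem_range] at hv ⊢
        obtain ⟨hvb, hvs, hvn⟩ := hv
        have hsplitv : ∑ i, v i = v n + ∑ i ∈ Finset.univ.erase n, v i :=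
          (Finset.add_sum_erase _ v (Finset.mem_univ n)).symm
        refine ⟨fun i => ?_, ?_⟩
        · rcases eq_or_ne i n with rfl | hin
          · simp only [ha, Function.update_self]
            have := hvb i; omega
          · simp only [ha, Function.update_of_ne hin]
            exact hvb i
        · rw [Finset.sum_update_of_mem (Finset.mem_univ n), Finset.sdiff_singleton_eq_erase]
          omega
      · intro w hw
        simp only [Finset.mem_filter, Fintype.mem_piFinset, Finset.mem_range] at hw ⊢
        obtain ⟨hwb, hws⟩ := hw
        have hbn := hwb n
        rw [ha, Function.update_self] at hbn
        refine ⟨fun i => ?_, ?_, ?_⟩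
        · rcases eq_or_ne i n with rfl | hin
          · simp only [Function.update_self]; omega
          · simp only [Function.update_of_ne hin]
            have := hwb i
            rwa [ha, Function.update_of_ne hin] at this
        · rw [Finset.sum_update_of_mem (Finset.mem_univ n), Finset.sdiff_singleton_eq_erase]
          have hsplitw : ∑ i, w i = w n + ∑ i ∈ Finset.univ.erase n, w i :=
            (Finset.add_sum_erase _ w (Finset.mem_univ n)).symm
          omega
        · simp
      · intro v hv
        simp only [Finset.mem_filter] at hv
        funext i
        rcases eq_or_ne i n with rfl | hin
        · simp only [Function.update_self]
          have := hv.2.2; omega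
        · simp [Function.update_of_ne hin]
      · intro w hw
        funext i
        rcases eq_or_ne i n with rfl | hin
        · simp
        · simp [Function.update_of_ne hin]
      · intro v hv
        rw [← Finset.mul_prod_erase Finset.univ _ (Finset.mem_univ n)]
        congr 1
        · simp [ha]
        · refine Finset.prod_congr rfl fun i hi => ?_
          have hin := (Finset.mem_erase.mp hi).1
          simp [ha, Function.update_of_ne hin]
    · rw [if_neg h]
      refine Finset.sum_eq_zero fun v hv => ?_
      have hvn : v n = 0 := by
        rw [hS, Finset.mem_filter, Fintype.mem_piFinset] at hv
        have := hv.1 n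
        rw [Finset.mem_range] at this
        omega
      simp [hvn]
  calc ∑ v ∈ S, ∑ n ∈ Finset.univ.filter (fun n => v n ≠ 0),
        (m n - 1).choose (v n - 1) *
          ∏ n' ∈ (Finset.univ.filter (fun n' => v n' ≠ 0)).erase n, (m n').choose (v n')
      = ∑ v ∈ S, ∑ n : Fin N, (if v n ≠ 0 then
          (m n - 1).choose (v n - 1) * ∏ n' ∈ Finset.univ.erase n, (m n').choose (v n')
        else 0) := by
        refine Finset.sum_congr rfl fun v hv => ?_
        rw [Finset.sum_filter]
        refine Finset.sum_congr rfl fun n _ => ?_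
        rcases eq_or_ne (v n) 0 with h0 | h0
        · simp [h0]
        · rw [if_pos h0, if_pos h0, step1 v hv n]
    _ = ∑ n : Fin N, ∑ v ∈ S, (if v n ≠ 0 then
          (m n - 1).choose (v n - 1) * ∏ n' ∈ Finset.univ.erase n, (m n').choose (v n')
        else 0) := Finset.sum_comm
    _ = ∑ n : Fin N, (if 0 < m n then (K - 1).choose t else 0) :=
        Finset.sum_congr rfl fun n _ => key n
    _ = (Finset.univ.filter (fun n => 0 < m n)).card * (K - 1).choose t := by
        rw [← Finset.sum_filter, Finset.sum_const, smul_eq_mul]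
end

section
/- For nonnegative integers m_1,...,m_N with \sum_n m_n = K, N^* = |\{n: m_n>0\}| \ge 1, fixed index j with m_j > 0, and 1 \le t \le K-1: the sum over transmission types \vec{t} with t_j \ge 1 of \sum_{n \in supp(\vec{t}) \setminus \{j\}} \binom{m_j - 1}{t_j - 1} \binom{m_n - 1}{t_n - 1} \prod_{n' \in supp(\vec{t}) \setminus \{n, j\}} \binom{m_{n'}}{t_{n'}} equals (N^*-1) \binom{K-2}{t-1}. -/
open Finset

lemma multi_vand (N : ℕ) (g : Fin N → ℕ) (c : ℕ) :
    ∑ w ∈ (Fintype.piFinset fun k => Finset.range (g k + 1)).filter (fun w => ∑ k, w k = c),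
      ∏ k, (g k).choose (w k) = (∑ k, g k).choose c := by
  induction N generalizing c with
  | zero =>
      rw [Finset.sum_filter]
      simp only [Finset.univ_eq_empty, Finset.sum_empty, Finset.prod_empty]
      cases c <;> simp [Fintype.piFinset_of_isEmpty]
  | succ N ih =>
      have hmap : (Fintype.piFinset fun k : Fin (N+1) => Finset.range (g k + 1))
          = ((Finset.range (g 0 + 1)) ×ˢ
              (Fintype.piFinset fun k : Fin N => Finset.range (Fin.tail g k + 1))).map
            (Fin.consEquiv fun _ => ℕ).toEmbedding := by
        ext f
        rw [Finset.mem_map_equiv, Finset.mem_product]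
        constructor
        · intro hf
          exact ⟨Fintype.mem_piFinset.1 hf 0, Fintype.mem_piFinset.2 fun k =>
            Fintype.mem_piFinset.1 hf k.succ⟩
        · rintro ⟨h0, ht⟩
          exact Fintype.mem_piFinset.2 fun k => Fin.cases h0
            (fun i => Fintype.mem_piFinset.1 ht i) k
      rw [Finset.sum_filter, hmap, Finset.sum_map, Finset.sum_product]
      simp only [Equiv.toEmbedding_apply, Fin.consEquiv_apply]
      have hstep : ∀ a ∈ Finset.range (g 0 + 1),
          (∑ w' ∈ Fintype.piFinset fun k : Fin N => Finset.range (Fin.tail g k + 1),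
            if (∑ k, Fin.cons (α := fun _ => ℕ) a w' k) = c then
              ∏ k, (g k).choose (Fin.cons (α := fun _ => ℕ) a w' k) else 0)
          = if a ≤ c then (g 0).choose a * (∑ k, Fin.tail g k).choose (c - a) else 0 := by
        intro a _
        by_cases hac : a ≤ c
        · rw [if_pos hac, ← ih (Fin.tail g) (c - a), Finset.sum_filter, Finset.mul_sum]
          refine Finset.sum_congr rfl fun w' _ => ?_
          simp only [Fin.sum_univ_succ, Fin.prod_univ_succ, Fin.cons_zero, Fin.cons_succ,
            Fin.tail]
          have : a + ∑ k, w' k = c ↔ ∑ k, w' k = c - a := by omega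
          simp only [this]
          split <;> simp
        · rw [if_neg hac]
          refine Finset.sum_eq_zero fun w' _ => ?_
          simp only [Fin.sum_univ_succ, Fin.cons_zero, Fin.cons_succ]
          have : ¬ (a + ∑ k, w' k = c) := by omega
          simp [this]
      rw [Finset.sum_congr rfl hstep]
      have hrhs : (∑ k, g k).choose c
          = ∑ a ∈ Finset.range (c + 1), (g 0).choose a * (∑ k, Fin.tail g k).choose (c - a) := by
        rw [Fin.sum_univ_succ, Nat.add_choose_eq, Finset.Nat.sum_antidiagonal_eq_sum_range_succ_mk]
        rfl
      rw [hrhs, ← Finset.sum_filter]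
      apply Finset.sum_subset
      · intro a ha
        simp only [Finset.mem_filter, Finset.mem_range] at ha ⊢
        omega
      · intro a ha hna
        simp only [Finset.mem_filter, Finset.mem_range] at ha hna
        have : g 0 < a := by omega
        simp [Nat.choose_eq_zero_of_lt this]

lemma inner_sum_eq (N K t : ℕ) (m : Fin N → ℕ) (hm : ∑ k, m k = K) (j n : Fin N)
    (hj : 0 < m j) (hn : 0 < m n) (hjn : j ≠ n) (ht1 : 1 ≤ t) :
    ∑ v ∈ (Fintype.piFinset fun k => Finset.range (m k + 1)).filter
        (fun v => ((∑ k, v k = t + 1) ∧ 0 < v j) ∧ v n ≠ 0),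
      (m j - 1).choose (v j - 1) * ((m n - 1).choose (v n - 1)) *
        ∏ n' ∈ (Finset.univ.erase j).erase n, (m n').choose (v n')
    = (K - 2).choose (t - 1) := by
  classical
  have hnj : n ≠ j := Ne.symm hjn
  have hnmem : n ∈ Finset.univ.erase j := Finset.mem_erase.2 ⟨hnj, Finset.mem_univ n⟩
  have key : ∀ f : Fin N → ℕ,
      ∑ k, f k = f j + (f n + ∑ k ∈ (Finset.univ.erase j).erase n, f k) := by
    intro f
    rw [← Finset.add_sum_erase _ f (Finset.mem_univ j), ← Finset.add_sum_erase _ f hnmem]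
  set g : Fin N → ℕ := Function.update (Function.update m j (m j - 1)) n (m n - 1) with hg
  have hgj : g j = m j - 1 := by
    simp only [hg, Function.update_of_ne hjn, Function.update_self]
  have hgn : g n = m n - 1 := by simp only [hg, Function.update_self]
  have hgk : ∀ k, k ≠ j → k ≠ n → g k = m k := by
    intro k h1 h2
    simp only [hg, Function.update_of_ne h2, Function.update_of_ne h1]
  have hrest : ∑ k ∈ (Finset.univ.erase j).erase n, g k
      = ∑ k ∈ (Finset.univ.erase j).erase n, m k := by
    refine Finset.sum_congr rfl fun k hk => ?_
    simp only [Finset.mem_erase] at hk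
    exact hgk k hk.2.1 hk.1
  have hgsum : ∑ k, g k + 2 = K := by
    have h1 := key g
    have h2 := key m
    rw [hgj, hgn, hrest] at h1
    omega
  -- the bijection
  have main : ∑ v ∈ (Fintype.piFinset fun k => Finset.range (m k + 1)).filter
        (fun v => ((∑ k, v k = t + 1) ∧ 0 < v j) ∧ v n ≠ 0),
      (m j - 1).choose (v j - 1) * ((m n - 1).choose (v n - 1)) *
        ∏ n' ∈ (Finset.univ.erase j).erase n, (m n').choose (v n')
      = ∑ w ∈ (Fintype.piFinset fun k => Finset.range (g k + 1)).filter
          (fun w => ∑ k, w k = t - 1),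
        ∏ k, (g k).choose (w k) := by
    refine Finset.sum_nbij'
      (fun v => Function.update (Function.update v j (v j - 1)) n (v n - 1))
      (fun w => Function.update (Function.update w j (w j + 1)) n (w n + 1))
      ?_ ?_ ?_ ?_ ?_
    · intro v hv
      simp only [Finset.mem_filter, Fintype.mem_piFinset, Finset.mem_range] at hv ⊢
      obtain ⟨hv1, ⟨hv2, hv3⟩, hv4⟩ := hv
      constructor
      · intro k
        by_cases hkn : k = n
        · subst hkn
          rw [Function.update_self, hgn]
          have := hv1 k; omega
        · rw [Function.update_of_ne hkn]
          by_cases hkj : k = j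
          · subst hkj
            rw [Function.update_self, hgj]
            have := hv1 k; omega
          · rw [Function.update_of_ne hkj, hgk k hkj hkn]
            exact hv1 k
      · have h1 := key (Function.update (Function.update v j (v j - 1)) n (v n - 1))
        have h2 := key v
        have e1 : (Function.update (Function.update v j (v j - 1)) n (v n - 1)) j
            = v j - 1 := by rw [Function.update_of_ne hjn, Function.update_self]
        have e2 : (Function.update (Function.update v j (v j - 1)) n (v n - 1)) n
            = v n - 1 := Function.update_self _ _ _
        have e3 : ∑ k ∈ (Finset.univ.erase j).erase n,
            (Function.update (Function.update v j (v j - 1)) n (v n - 1)) k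
            = ∑ k ∈ (Finset.univ.erase j).erase n, v k := by
          refine Finset.sum_congr rfl fun k hk => ?_
          simp only [Finset.mem_erase] at hk
          rw [Function.update_of_ne hk.1, Function.update_of_ne hk.2.1]
        rw [e1, e2, e3] at h1
        omega
    · intro w hw
      simp only [Finset.mem_filter, Fintype.mem_piFinset, Finset.mem_range] at hw ⊢
      obtain ⟨hw1, hw2⟩ := hw
      have e1 : (Function.update (Function.update w j (w j + 1)) n (w n + 1)) j
          = w j + 1 := by rw [Function.update_of_ne hjn, Function.update_self]
      have e2 : (Function.update (Function.update w j (w j + 1)) n (w n + 1)) n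
          = w n + 1 := Function.update_self _ _ _
      have e3 : ∑ k ∈ (Finset.univ.erase j).erase n,
          (Function.update (Function.update w j (w j + 1)) n (w n + 1)) k
          = ∑ k ∈ (Finset.univ.erase j).erase n, w k := by
        refine Finset.sum_congr rfl fun k hk => ?_
        simp only [Finset.mem_erase] at hk
        rw [Function.update_of_ne hk.1, Function.update_of_ne hk.2.1]
      refine ⟨?_, ⟨?_, ?_⟩, ?_⟩
      · intro k
        by_cases hkn : k = n
        · subst hkn
          rw [Function.update_self]
          have := hw1 k; rw [hgn] at this; omega
        · rw [Function.update_of_ne hkn]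
          by_cases hkj : k = j
          · subst hkj
            rw [Function.update_self]
            have := hw1 k; rw [hgj] at this; omega
          · rw [Function.update_of_ne hkj]
            have := hw1 k; rw [hgk k hkj hkn] at this; omega
      · have h1 := key (Function.update (Function.update w j (w j + 1)) n (w n + 1))
        have h2 := key w
        rw [e1, e2, e3] at h1
        omega
      · rw [e1]; omega
      · rw [e2]; omega
    · intro v hv
      simp only [Finset.mem_filter, Fintype.mem_piFinset, Finset.mem_range] at hv
      obtain ⟨hv1, ⟨hv2, hv3⟩, hv4⟩ := hv
      beta_reduce
      funext k
      by_cases hkn : k = n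
      · subst hkn
        rw [Function.update_self, Function.update_self]
        omega
      · rw [Function.update_of_ne hkn]
        by_cases hkj : k = j
        · subst hkj
          rw [Function.update_self, Function.update_of_ne hjn, Function.update_self]
          omega
        · rw [Function.update_of_ne hkj, Function.update_of_ne hkn,
            Function.update_of_ne hkj]
    · intro w hw
      beta_reduce
      funext k
      by_cases hkn : k = n
      · subst hkn
        rw [Function.update_self, Function.update_self]
        omega
      · rw [Function.update_of_ne hkn]
        by_cases hkj : k = j
        · subst hkj
          rw [Function.update_self, Function.update_of_ne hjn, Function.update_self]
          omega
        · rw [Function.update_of_ne hkj, Function.update_of_ne hkn,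
            Function.update_of_ne hkj]
    · intro v hv
      have e1 : (Function.update (Function.update v j (v j - 1)) n (v n - 1)) j
          = v j - 1 := by rw [Function.update_of_ne hjn, Function.update_self]
      have e2 : (Function.update (Function.update v j (v j - 1)) n (v n - 1)) n
          = v n - 1 := Function.update_self _ _ _
      beta_reduce
      rw [← Finset.mul_prod_erase _ _ (Finset.mem_univ j),
        ← Finset.mul_prod_erase _ _ hnmem, e1, e2, hgj, hgn, ← mul_assoc]
      congr 1
      refine Finset.prod_congr rfl fun k hk => ?_
      simp only [Finset.mem_erase] at hk
      rw [Function.update_of_ne hk.1, Function.update_of_ne hk.2.1, hgk k hk.2.1 hk.1]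
  rw [main, multi_vand]
  have hK : ∑ k, g k = K - 2 := Nat.eq_sub_of_add_eq hgsum
  rw [hK]

/-- Memory saving of the fully decomposed scheme: for a fixed group `j` with `m_j > 0`,
`∑_{t⃗ : t_j ≥ 1} ∑_{n ∈ supp(t⃗)\{j\}} C(m_j-1,t_j-1) C(m_n-1,t_n-1)
   ∏_{n' ∈ supp(t⃗)\{n,j\}} C(m_{n'},t_{n'}) = (N*-1)·C(K-2, t-1)`. -/
theorem delta_memory_full_decomposition (N K t : ℕ) (m : Fin N → ℕ)
    (hm : ∑ n, m n = K) (j : Fin N) (hj : 0 < m j)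
    (hNs : 1 ≤ (Finset.univ.filter (fun n => 0 < m n)).card)
    (ht1 : 1 ≤ t) (ht2 : t < K) :
    ∑ v ∈ (Fintype.piFinset fun n => Finset.range (m n + 1)).filter
        (fun v => (∑ n, v n = t + 1) ∧ 0 < v j),
      ∑ n ∈ ((Finset.univ.filter (fun n => v n ≠ 0)).erase j),
        (m j - 1).choose (v j - 1) * ((m n - 1).choose (v n - 1)) *
          ∏ n' ∈ ((Finset.univ.filter (fun n' => v n' ≠ 0)).erase j).erase n,
            (m n').choose (v n')
      = ((Finset.univ.filter (fun n => 0 < m n)).card - 1) * (K - 2).choose (t - 1) := by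
  classical
  -- Step 1: swap the sums
  rw [Finset.sum_comm' (s' := fun n => ((Fintype.piFinset fun k => Finset.range (m k + 1)).filter
        (fun v => (∑ k, v k = t + 1) ∧ 0 < v j)).filter (fun v => v n ≠ 0))
      (t' := Finset.univ.erase j)
      (by
        intro v n
        simp only [Finset.mem_filter, Finset.mem_erase, Finset.mem_univ, and_true, true_and]
        tauto)]
  -- Step 2: replace the support-product by the full product
  have step2 : ∀ n ∈ Finset.univ.erase j,
      ∑ v ∈ ((Fintype.piFinset fun k => Finset.range (m k + 1)).filter
          (fun v => (∑ k, v k = t + 1) ∧ 0 < v j)).filter (fun v => v n ≠ 0),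
        (m j - 1).choose (v j - 1) * ((m n - 1).choose (v n - 1)) *
          ∏ n' ∈ ((Finset.univ.filter (fun n' => v n' ≠ 0)).erase j).erase n,
            (m n').choose (v n')
      = ∑ v ∈ (Fintype.piFinset fun k => Finset.range (m k + 1)).filter
          (fun v => ((∑ k, v k = t + 1) ∧ 0 < v j) ∧ v n ≠ 0),
        (m j - 1).choose (v j - 1) * ((m n - 1).choose (v n - 1)) *
          ∏ n' ∈ (Finset.univ.erase j).erase n, (m n').choose (v n') := by
    intro n hn
    rw [Finset.filter_filter]
    refine Finset.sum_congr rfl fun v hv => ?_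
    congr 1
    refine Finset.prod_subset ?_ ?_
    · intro k hk
      simp only [Finset.mem_erase, Finset.mem_filter, Finset.mem_univ, and_true] at hk ⊢
      exact ⟨hk.1, hk.2.1⟩
    · intro k hk hns
      simp only [Finset.mem_erase, Finset.mem_univ, and_true] at hk
      have hvk : v k = 0 := by
        by_contra h
        exact hns (Finset.mem_erase.2 ⟨hk.1, Finset.mem_erase.2 ⟨hk.2,
          Finset.mem_filter.2 ⟨Finset.mem_univ k, h⟩⟩⟩)
      rw [hvk, Nat.choose_zero_right]
  rw [Finset.sum_congr rfl step2]
  -- Step 3: restrict to groups with m n > 0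
  rw [← Finset.sum_subset
      (show (Finset.univ.filter (fun n => 0 < m n)).erase j ⊆ Finset.univ.erase j from by
        intro k hk
        simp only [Finset.mem_erase, Finset.mem_filter, Finset.mem_univ, true_and] at hk ⊢
        exact ⟨hk.1, trivial⟩)
      (by
        intro n hn hnn
        simp only [Finset.mem_erase, Finset.mem_filter, Finset.mem_univ, true_and,
          and_true, not_and, not_lt, Nat.le_zero] at hn hnn
        have hmn : m n = 0 := hnn hn
        refine Finset.sum_eq_zero fun v hv => ?_
        exfalso
        simp only [Finset.mem_filter, Fintype.mem_piFinset, Finset.mem_range] at hv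
        have := hv.1 n
        rw [hmn] at this
        exact hv.2.2 (by omega))]
  -- Step 4: evaluate each inner sum
  rw [Finset.sum_congr rfl (fun n hn => ?_), Finset.sum_const, smul_eq_mul]
  · congr 1
    rw [Finset.card_erase_of_mem]
    simp only [Finset.mem_filter, Finset.mem_univ, true_and]
    exact hj
  · simp only [Finset.mem_erase, Finset.mem_filter, Finset.mem_univ, true_and] at hn
    exact inner_sum_eq N K t m hm j n hj hn.2 (Ne.symm hn.1) ht1
end

section
/- For the fully decomposed pattern (each partition block a singleton), M_{d,P,k} = N\binom{K-1}{t-1} - (N^*-1)\binom{K-2}{t-1} for every user k and demand vector d with N^* distinct demanded files, where 1 \le t \le K-1. -/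
open Finset Polynomial

lemma vand {N : ℕ} (m : Fin N → ℕ) (c : ℕ) :
    ∑ v ∈ (Fintype.piFinset fun n => Finset.range (m n + 1)).filter (fun v => ∑ n, v n = c),
      ∏ n, (m n).choose (v n) = (∑ n, m n).choose c := by
  have key : ((X + 1 : Polynomial ℕ) ^ (∑ n, m n)).coeff c = (∑ n, m n).choose c :=
    coeff_X_add_one_pow ℕ _ c
  rw [← key, ← Finset.prod_pow_eq_pow_sum]
  have expand : ∀ n : Fin N, (X + 1 : Polynomial ℕ) ^ (m n)
      = ∑ j ∈ Finset.range (m n + 1), Polynomial.C ((m n).choose j) * X ^ j := by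
    intro n
    rw [add_pow]
    refine Finset.sum_congr rfl fun j hj => ?_
    simp [mul_comm, Polynomial.C_eq_natCast]
  simp_rw [expand]
  rw [Finset.prod_univ_sum]
  rw [Polynomial.finset_sum_coeff]
  have hterm : ∀ v : Fin N → ℕ,
      (∏ n, Polynomial.C ((m n).choose (v n)) * X ^ (v n)).coeff c
        = if ∑ n, v n = c then ∏ n, (m n).choose (v n) else 0 := by
    intro v
    rw [Finset.prod_mul_distrib, ← map_prod, Finset.prod_pow_eq_pow_sum,
      Polynomial.coeff_C_mul, Polynomial.coeff_X_pow]
    simp [eq_comm]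
  simp_rw [hterm]
  rw [Finset.sum_filter]



lemma split_sum {N : ℕ} (a b : Fin N) (hab : a ≠ b) (v : Fin N → ℕ) :
    ∑ n, v n = v a + (v b + ∑ n ∈ (Finset.univ.erase a).erase b, v n) := by
  rw [← Finset.add_sum_erase _ _ (Finset.mem_univ a)]
  congr 1
  rw [← Finset.add_sum_erase _ _ (Finset.mem_erase.mpr ⟨hab.symm, Finset.mem_univ b⟩)]

lemma split_prod {N : ℕ} (a b : Fin N) (hab : a ≠ b) (v : Fin N → ℕ) :
    ∏ n, v n = v a * (v b * ∏ n ∈ (Finset.univ.erase a).erase b, v n) := by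
  rw [← Finset.mul_prod_erase _ _ (Finset.mem_univ a)]
  congr 1
  rw [← Finset.mul_prod_erase _ _ (Finset.mem_erase.mpr ⟨hab.symm, Finset.mem_univ b⟩)]

lemma vand_shift {N : ℕ} (m : Fin N → ℕ) (a b : Fin N) (hab : a ≠ b)
    (ha : 0 < m a) (hb : 0 < m b) (c : ℕ) :
    ∑ v ∈ (Fintype.piFinset fun n => Finset.range (m n + 1)).filter
        (fun v => (∑ n, v n = c + 2) ∧ 0 < v a ∧ 0 < v b),
      (m a - 1).choose (v a - 1) * ((m b - 1).choose (v b - 1)) *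
        ∏ n' ∈ (Finset.univ.erase a).erase b, (m n').choose (v n')
      = (∑ n, m n - 2).choose c := by
  classical
  set m' : Fin N → ℕ := fun n => if n = a then m a - 1 else if n = b then m b - 1 else m n
    with hm'
  have hm'a : m' a = m a - 1 := by simp [hm']
  have hm'b : m' b = m b - 1 := by simp [hm', hab.symm]
  have hm'o : ∀ n : Fin N, n ≠ a → n ≠ b → m' n = m n := by
    intro n h1 h2; simp [hm', h1, h2]
  have hee : ∀ n : Fin N, n ∈ (Finset.univ.erase a).erase b → m' n = m n := by
    intro n hn
    obtain ⟨h2, h1⟩ := Finset.mem_erase.mp hn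
    exact hm'o n (Finset.mem_erase.mp h1).1 h2
  have hsum' : ∑ n, m' n = ∑ n, m n - 2 := by
    have e1 := split_sum a b hab m'
    have e2 := split_sum a b hab m
    have e3 : ∑ n ∈ (Finset.univ.erase a).erase b, m' n
        = ∑ n ∈ (Finset.univ.erase a).erase b, m n := Finset.sum_congr rfl hee
    omega
  rw [← hsum', ← vand m' c]
  refine Finset.sum_nbij' (fun v => fun n => if n = a then v a - 1 else if n = b then v b - 1 else v n)
    (fun w => fun n => if n = a then w a + 1 else if n = b then w b + 1 else w n)
    ?_ ?_ ?_ ?_ ?_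
  · intro v hv
    obtain ⟨hv1, hv2, hv3, hv4⟩ : (∀ n, v n < m n + 1) ∧ (∑ n, v n = c + 2) ∧ 0 < v a ∧ 0 < v b := by
      obtain ⟨h1, h2⟩ := Finset.mem_filter.mp hv
      exact ⟨fun n => Finset.mem_range.mp (Fintype.mem_piFinset.mp h1 n), h2.1, h2.2.1, h2.2.2⟩
    rw [Finset.mem_filter]
    constructor
    · rw [Fintype.mem_piFinset]
      intro n
      rw [Finset.mem_range]
      by_cases h1 : n = a
      · subst h1; simp only [eq_self_iff_true, if_true]; rw [hm'a]; have := hv1 n; omega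
      · by_cases h2 : n = b
        · subst h2; simp only [if_neg h1, eq_self_iff_true, if_true]; rw [hm'b]; have := hv1 n; omega
        · simp only [if_neg h1, if_neg h2]; rw [hm'o n h1 h2]; exact hv1 n
    · rw [split_sum a b hab]
      simp only [eq_self_iff_true, if_true, if_neg hab.symm]
      have : ∑ n ∈ (Finset.univ.erase a).erase b,
          (if n = a then v a - 1 else if n = b then v b - 1 else v n) = ∑ n ∈ (Finset.univ.erase a).erase b, v n := by
        refine Finset.sum_congr rfl fun n hn => ?_
        obtain ⟨h2, h1⟩ := Finset.mem_erase.mp hn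
        simp [(Finset.mem_erase.mp h1).1, h2]
      rw [this]
      have := split_sum a b hab v
      omega
  · intro w hw
    obtain ⟨hw1, hw2⟩ := Finset.mem_filter.mp hw
    have hwlt : ∀ n, w n < m' n + 1 := fun n => Finset.mem_range.mp (Fintype.mem_piFinset.mp hw1 n)
    rw [Finset.mem_filter]
    refine ⟨?_, ?_, ?_, ?_⟩
    · rw [Fintype.mem_piFinset]
      intro n
      rw [Finset.mem_range]
      by_cases h1 : n = a
      · subst h1; have := hwlt n; rw [hm'a] at this; simp only [eq_self_iff_true, if_true]; omega
      · by_cases h2 : n = b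
        · subst h2; have := hwlt n; rw [hm'b] at this; simp only [if_neg h1, eq_self_iff_true, if_true]; omega
        · have := hwlt n; rw [hm'o n h1 h2] at this; simp only [if_neg h1, if_neg h2]; exact this
    · rw [split_sum a b hab]
      simp only [eq_self_iff_true, if_true, if_neg hab.symm]
      have : ∑ n ∈ (Finset.univ.erase a).erase b,
          (if n = a then w a + 1 else if n = b then w b + 1 else w n) = ∑ n ∈ (Finset.univ.erase a).erase b, w n := by
        refine Finset.sum_congr rfl fun n hn => ?_
        obtain ⟨h2, h1⟩ := Finset.mem_erase.mp hn
        simp [(Finset.mem_erase.mp h1).1, h2]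
      rw [this]
      have := split_sum a b hab w
      omega
    · simp only [eq_self_iff_true, if_true]; omega
    · simp only [if_neg hab.symm, eq_self_iff_true, if_true]; omega
  · intro v hv
    funext n
    obtain ⟨h1, h2⟩ := Finset.mem_filter.mp hv
    by_cases ha' : n = a
    · subst ha'; simp only [eq_self_iff_true, if_true]; have := h2.2.1; omega
    · by_cases hb' : n = b
      · subst hb'; simp only [if_neg ha', eq_self_iff_true, if_true]; have := h2.2.2; omega
      · simp [ha', hb']
  · intro w hw
    funext n
    by_cases ha' : n = a
    · subst ha'; simp only [eq_self_iff_true, if_true]; omega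
    · by_cases hb' : n = b
      · subst hb'; simp only [if_neg ha', eq_self_iff_true, if_true]; omega
      · simp [ha', hb']
  · intro v hv
    rw [split_prod a b hab (fun n => (m' n).choose _)]
    simp only [eq_self_iff_true, if_true, if_neg hab.symm, hm'a, hm'b]
    rw [← mul_assoc]
    congr 1
    refine Finset.prod_congr rfl fun n hn => ?_
    obtain ⟨h2, h1⟩ := Finset.mem_erase.mp hn
    have h1' := (Finset.mem_erase.mp h1).1
    rw [hm'o n h1' h2]
    simp [h1', h2]

/-- For the fully decomposed pattern (each partition block a singleton),
`M_{d,P,k} = N·C(K-1,t-1) - (N*-1)·C(K-2,t-1)` for every user `k` and demand vector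
`d` with `N*` distinct demanded files, where `1 ≤ t ≤ K-1`. -/
theorem memory_full_decomposition {N K t : ℕ} (d : Fin K → Fin N) (k : Fin K)
    (m : Fin N → ℕ)
    (hm : ∀ n, m n = (Finset.univ.filter (fun i => d i = n)).card)
    (hmK : ∑ n, m n = K)
    (ht1 : 1 ≤ t) (ht2 : t < K)
    (ΔM : ℕ)
    (hΔM : ΔM = ∑ v ∈ (Fintype.piFinset fun n => Finset.range (m n + 1)).filter
        (fun v => (∑ n, v n = t + 1) ∧ 0 < v (d k)),
      ∑ n ∈ (Finset.univ.filter (fun n => v n ≠ 0)).erase (d k),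
        (m (d k) - 1).choose (v (d k) - 1) * ((m n - 1).choose (v n - 1)) *
          ∏ n' ∈ ((Finset.univ.filter (fun n' => v n' ≠ 0)).erase (d k)).erase n,
            (m n').choose (v n')) :
    (N : ℤ) * (K - 1).choose (t - 1) - ΔM
      = (N : ℤ) * (K - 1).choose (t - 1)
        - (((Finset.univ.filter (fun n => 0 < m n)).card : ℤ) - 1)
          * (K - 2).choose (t - 1) := by
  classical
  have ht' : t - 1 + 2 = t + 1 := by clear hΔM; omega
  set a := d k with hak
  have hma : 0 < m a := by
    rw [hm]
    exact Finset.card_pos.mpr ⟨k, by simp [hak]⟩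
  set C2 := (K - 2).choose (t - 1) with hC2
  have hcard : a ∈ Finset.univ.filter (fun n => 0 < m n) := by simp [hma]
  set A := (Fintype.piFinset fun n : Fin N => Finset.range (m n + 1)).filter
      (fun v => (∑ n, v n = t + 1) ∧ 0 < v a) with hA
  clear_value a C2 A
  have step1 : ∀ v : Fin N → ℕ,
      (∑ n ∈ (Finset.univ.filter (fun n => v n ≠ 0)).erase a,
        (m a - 1).choose (v a - 1) * ((m n - 1).choose (v n - 1)) *
          ∏ n' ∈ ((Finset.univ.filter (fun n' => v n' ≠ 0)).erase a).erase n,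
            (m n').choose (v n'))
      = ∑ n ∈ Finset.univ.erase a, if v n ≠ 0 then
        (m a - 1).choose (v a - 1) * ((m n - 1).choose (v n - 1)) *
          ∏ n' ∈ ((Finset.univ.filter (fun n' => v n' ≠ 0)).erase a).erase n,
            (m n').choose (v n') else 0 := by
    intro v
    rw [← Finset.filter_erase, Finset.sum_filter]
  have key : ΔM = ((Finset.univ.filter (fun n => 0 < m n)).card - 1) * C2 := by
    rw [hΔM]
    rw [Finset.sum_congr rfl fun v _ => step1 v, Finset.sum_comm]
    have inner : ∀ n ∈ Finset.univ.erase a,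
        (∑ v ∈ A, if v n ≠ 0 then
          (m a - 1).choose (v a - 1) * ((m n - 1).choose (v n - 1)) *
            ∏ n' ∈ ((Finset.univ.filter (fun n' => v n' ≠ 0)).erase a).erase n,
              (m n').choose (v n') else 0)
        = if 0 < m n then C2 else 0 := by
      intro n hn
      have hna : n ≠ a := (Finset.mem_erase.mp hn).1
      rw [← Finset.sum_filter]
      by_cases hmn : 0 < m n
      · rw [if_pos hmn]
        have hset : A.filter (fun v => v n ≠ 0)
            = (Fintype.piFinset fun n : Fin N => Finset.range (m n + 1)).filter
              (fun v => (∑ n', v n' = (t - 1) + 2) ∧ 0 < v a ∧ 0 < v n) := by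
          rw [hA, Finset.filter_filter, ht']
          apply Finset.filter_congr
          intro v _
          simp [Nat.pos_iff_ne_zero, and_assoc]
        rw [hset]
        have hterm : ∀ v ∈ (Fintype.piFinset fun n : Fin N => Finset.range (m n + 1)).filter
              (fun v => (∑ n', v n' = (t - 1) + 2) ∧ 0 < v a ∧ 0 < v n),
            (m a - 1).choose (v a - 1) * ((m n - 1).choose (v n - 1)) *
              ∏ n' ∈ ((Finset.univ.filter (fun n' => v n' ≠ 0)).erase a).erase n,
                (m n').choose (v n')
            = (m a - 1).choose (v a - 1) * ((m n - 1).choose (v n - 1)) *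
              ∏ n' ∈ (Finset.univ.erase a).erase n, (m n').choose (v n') := by
          intro v _
          congr 1
          refine Finset.prod_subset ?_ ?_
          · exact Finset.erase_subset_erase _ (Finset.erase_subset_erase _ (Finset.filter_subset _ _))
          · intro x hx hx'
            have hxn : x ≠ n := (Finset.mem_erase.mp hx).1
            have hxa : x ≠ a := (Finset.mem_erase.mp (Finset.mem_of_mem_erase hx)).1
            have hvx : v x = 0 := by
              by_contra h
              exact hx' (Finset.mem_erase.mpr ⟨hxn, Finset.mem_erase.mpr ⟨hxa,
                Finset.mem_filter.mpr ⟨Finset.mem_univ x, h⟩⟩⟩)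
            rw [hvx, Nat.choose_zero_right]
        rw [Finset.sum_congr rfl hterm, vand_shift m a n (fun h => hna h.symm) hma hmn (t - 1),
          hmK, hC2]
      · rw [if_neg hmn]
        refine Finset.sum_eq_zero fun v hv => ?_
        exfalso
        obtain ⟨hv1, hv2⟩ := Finset.mem_filter.mp hv
        rw [hA] at hv1
        obtain ⟨hv3, _⟩ := Finset.mem_filter.mp hv1
        have h1 := Finset.mem_range.mp (Fintype.mem_piFinset.mp hv3 n)
        have h2 : m n = 0 := Nat.eq_zero_of_not_pos hmn
        rw [h2] at h1
        exact hv2 (Nat.lt_one_iff.mp h1)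
    rw [Finset.sum_congr rfl inner, ← Finset.sum_filter, Finset.sum_const, smul_eq_mul]
    congr 1
    rw [Finset.filter_erase, Finset.card_erase_of_mem hcard]
  have h1 : 1 ≤ (Finset.univ.filter (fun n => 0 < m n)).card :=
    Finset.card_pos.mpr ⟨a, hcard⟩
  rw [key, Nat.cast_mul, Nat.cast_sub h1]
  push_cast
  ring
end
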